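/- An ambiguous split graph is a Helly circular-arc graph if and only if it is a circular-arc graph. -/

import Mathlib

namespace CAG

variable {V : Type*}

/-- The circle on which circular-arc models live. -/
abbrev Circle : Type := AddCircle (1 : ℝ)

/-- The closed arc of the circle starting at `s` and going a length `ℓ` in the
positive direction. -/
def circleArc (s ℓ : ℝ) : Set Circle :=
  (fun x : ℝ => (x : Circle)) '' Set.Icc s (s + ℓ)

/-- A circular-arc model of a graph `G`: an assignment of nonempty closed arcs of the
circle to vertices such that two distinct vertices are adjacent iff their arcs meet. -/
structure CircularArcModel (G : SimpleGraph V) where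
  arc : V → Set Circle
  isArc : ∀ v : V, ∃ s ℓ : ℝ, 0 ≤ ℓ ∧ arc v = circleArc s ℓ
  adj_iff : ∀ u v : V, u ≠ v → (G.Adj u v ↔ (arc u ∩ arc v).Nonempty)

/-- A graph is a circular-arc graph if it has a circular-arc model. -/
def IsCircularArcGraph (G : SimpleGraph V) : Prop := Nonempty (CircularArcModel G)

/-- An interval model of a graph `G`: an assignment of nonempty closed real intervals
to vertices such that two distinct vertices are adjacent iff their intervals meet. -/
structure IntervalModel (G : SimpleGraph V) where
  lo : V → ℝ
  hi : V → ℝ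
  lo_le_hi : ∀ v : V, lo v ≤ hi v
  adj_iff : ∀ u v : V, u ≠ v →
    (G.Adj u v ↔ (Set.Icc (lo u) (hi u) ∩ Set.Icc (lo v) (hi v)).Nonempty)

/-- The interval assigned to a vertex by an interval model. -/
def IntervalModel.ival {G : SimpleGraph V} (M : IntervalModel G) (v : V) : Set ℝ :=
  Set.Icc (M.lo v) (M.hi v)

/-- A graph is an interval graph if it has an interval model. -/
def IsIntervalGraph (G : SimpleGraph V) : Prop := Nonempty (IntervalModel G)

/-- The closed neighbourhood `N[v]` of a vertex. -/
def closedNbhd (G : SimpleGraph V) (v : V) : Set V := insert v (G.neighborSet v)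

/-- A vertex is simplicial if its closed neighbourhood is a clique. -/
def IsSimplicial (G : SimpleGraph V) (v : V) : Prop := G.IsClique (closedNbhd G v)

/-- The cycle graph on `n` vertices. -/
def cycleG (n : ℕ) : SimpleGraph (Fin n) :=
  SimpleGraph.fromRel (fun a b => (a.val + 1) % n = b.val)

/-- `G` contains an induced copy of `F`. -/
def InducedCopy {W : Type*} (F : SimpleGraph W) (G : SimpleGraph V) : Prop :=
  Nonempty (F ↪g G)

/-- A graph is chordal if it has no induced cycle of length at least 4. -/
def Chordal (G : SimpleGraph V) : Prop :=
  ∀ n : ℕ, 4 ≤ n → ¬ InducedCopy (cycleG n) G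

/-- The adjacency relation of the auxiliary graph `G^K`. -/
def auxAdj (G : SimpleGraph V) (K : Set V) (u v : V) : Prop :=
  (u ∈ K ∧ v ∈ K ∧ G.neighborSet u ∪ G.neighborSet v ≠ Set.univ) ∨
  (u ∉ K ∧ v ∉ K ∧ G.Adj u v) ∨
  (u ∈ K ∧ v ∉ K ∧ ¬ closedNbhd G v ⊆ closedNbhd G u) ∨
  (v ∈ K ∧ u ∉ K ∧ ¬ closedNbhd G u ⊆ closedNbhd G v)

/-- The auxiliary graph `G^K` associated with a graph `G` and a clique `K`. -/
def auxGraph (G : SimpleGraph V) (K : Set V) : SimpleGraph V where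
  Adj u v := u ≠ v ∧ auxAdj G K u v
  symm := ⟨by
    rintro u v ⟨hne, h⟩
    refine ⟨hne.symm, ?_⟩
    rcases h with ⟨h1, h2, h3⟩ | ⟨h1, h2, h3⟩ | ⟨h1, h2, h3⟩ | ⟨h1, h2, h3⟩
    · exact Or.inl ⟨h2, h1, by rwa [Set.union_comm]⟩
    · exact Or.inr <| Or.inl ⟨h2, h1, h3.symm⟩
    · exact Or.inr <| Or.inr <| Or.inr ⟨h1, h2, h3⟩
    · exact Or.inr <| Or.inr <| Or.inl ⟨h1, h2, h3⟩⟩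
  loopless := ⟨fun _ h => h.1 rfl⟩

/-- Condition (♯): `G^K` admits an interval model in which, for every `v ∈ K` and
`u ∉ K`, the interval of `v` contains the interval of `u` iff `u` and `v` are not
adjacent in `G`. -/
def SatisfiesSharp (G : SimpleGraph V) (K : Set V) : Prop :=
  ∃ M : IntervalModel (auxGraph G K),
    ∀ v ∈ K, ∀ u ∉ K, (M.ival u ⊆ M.ival v ↔ ¬ G.Adj v u)

/-- An independent set of a graph. -/
def IsIndependentSet (G : SimpleGraph V) (s : Set V) : Prop :=
  ∀ ⦃u⦄, u ∈ s → ∀ ⦃v⦄, v ∈ s → u ≠ v → ¬ G.Adj u v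

/-- A split partition: a partition of the vertex set into a clique and an independent set. -/
def IsSplitPartition (G : SimpleGraph V) (K S : Set V) : Prop :=
  K ∪ S = Set.univ ∧ Disjoint K S ∧ G.IsClique K ∧ IsIndependentSet G S

/-- A split graph. -/
def IsSplitGraph (G : SimpleGraph V) : Prop := ∃ K S : Set V, IsSplitPartition G K S

/-- A split graph is ambiguous if it has two distinct split partitions. -/
def Ambiguous (G : SimpleGraph V) : Prop :=
  ∃ K₁ S₁ K₂ S₂ : Set V, IsSplitPartition G K₁ S₁ ∧ IsSplitPartition G K₂ S₂ ∧
    (K₁, S₁) ≠ (K₂, S₂)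

/-- A maximal clique (as a set of vertices). -/
def IsMaxCliqueSet (G : SimpleGraph V) (C : Set V) : Prop :=
  G.IsClique C ∧ ∀ C' : Set V, G.IsClique C' → C ⊆ C' → C = C'

/-- A Helly circular-arc graph: one admitting a circular-arc model in which the arcs of
every maximal clique have a common point. -/
def IsHellyCircularArcGraph (G : SimpleGraph V) : Prop :=
  ∃ M : CircularArcModel G, ∀ C : Set V, IsMaxCliqueSet G C →
    ∃ p : Circle, ∀ v ∈ C, p ∈ M.arc v

/-- The edge `ab` lies on an induced 4-cycle. -/
def EdgeOnInducedC4 (G : SimpleGraph V) (a b : V) : Prop :=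
  ∃ c d : V, a ≠ c ∧ b ≠ d ∧ G.Adj a b ∧ G.Adj b c ∧ G.Adj c d ∧ G.Adj d a ∧
    ¬ G.Adj a c ∧ ¬ G.Adj b d

/-- A normalized circular-arc model. -/
def IsNormalized {G : SimpleGraph V} (M : CircularArcModel G) : Prop :=
  ∀ v₁ v₂ : V, G.Adj v₁ v₂ →
    (closedNbhd G v₂ ⊆ closedNbhd G v₁ → M.arc v₂ ⊆ M.arc v₁) ∧
    (G.neighborSet v₁ ∪ G.neighborSet v₂ = Set.univ → ¬ EdgeOnInducedC4 G v₁ v₂ →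
      M.arc v₁ ∪ M.arc v₂ = Set.univ)

/-- A universal vertex: a vertex adjacent to all other vertices. -/
def HasUniversalVertex (G : SimpleGraph V) : Prop :=
  ∃ v : V, ∀ u : V, u ≠ v → G.Adj v u

/-- `w` is a witness of the set `X ⊆ K`: a vertex of `S` adjacent in `G^K` to all of `X`. -/
def WitnessOf (G : SimpleGraph V) (K S : Set V) (w : V) (X : Set V) : Prop :=
  w ∈ S ∧ ∀ x ∈ X, (auxGraph G K).Adj w x

/-- A set `X` is witnessed if it has a witness. -/
def Witnessed (G : SimpleGraph V) (K S : Set V) (X : Set V) : Prop :=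
  ∃ w : V, WitnessOf G K S w X

/-- The induced subgraph of `G^K` on the vertex set `F` is witnessed: every maximal
clique of this subgraph that is disjoint from `S` is witnessed. -/
def WitnessedCopy (G : SimpleGraph V) (K S F : Set V) : Prop :=
  ∀ C ⊆ F, (auxGraph G K).IsClique C →
    (∀ C' ⊆ F, (auxGraph G K).IsClique C' → C ⊆ C' → C = C') →
    Disjoint C S → Witnessed G K S C

/-- The sun: a triangle 0,1,2 together with degree-two vertices 3 (adjacent to 0,1),
4 (adjacent to 1,2) and 5 (adjacent to 0,2). -/
def sunF : SimpleGraph (Fin 6) :=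
  SimpleGraph.fromRel (fun a b =>
    (a = 0 ∧ b = 1) ∨ (a = 0 ∧ b = 2) ∨ (a = 1 ∧ b = 2) ∨
    (a = 3 ∧ (b = 0 ∨ b = 1)) ∨ (a = 4 ∧ (b = 1 ∨ b = 2)) ∨ (a = 5 ∧ (b = 0 ∨ b = 2)))

/-- The long claw: centre 0 adjacent to 1,2,3; pendant vertices 4,5,6 attached to
1,2,3 respectively. -/
def longClaw : SimpleGraph (Fin 7) :=
  SimpleGraph.fromRel (fun a b =>
    (a = 0 ∧ (b = 1 ∨ b = 2 ∨ b = 3)) ∨ (a = 1 ∧ b = 4) ∨ (a = 2 ∧ b = 5) ∨ (a = 3 ∧ b = 6))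

/-- The whipping top, with vertices v0 = 0, v1 = 1, v2 = 2, v3 = 3, x1 = 4, x2 = 5,
x3 = 6: the path x1-v1-v2-v3-x3, with v0 adjacent to x1, v1, v2, v3, x3 and x2
adjacent exactly to v2. -/
def whippingTop : SimpleGraph (Fin 7) :=
  SimpleGraph.fromRel (fun a b =>
    (a = 4 ∧ b = 1) ∨ (a = 1 ∧ b = 2) ∨ (a = 2 ∧ b = 3) ∨ (a = 3 ∧ b = 6) ∨
    (a = 0 ∧ (b = 4 ∨ b = 1 ∨ b = 2 ∨ b = 3 ∨ b = 6)) ∨ (a = 5 ∧ b = 2))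

/-- The † graph on `p + 4` vertices: an induced path `v_1 … v_p` (the `inl` vertices),
a vertex `u0 = inr 0` adjacent to all `v_i`, and vertices `x1 = inr 1`, `x2 = inr 2`,
`x3 = inr 3` adjacent exactly to `v_1`, `u0`, `v_p` respectively. -/
def dagGraph (p : ℕ) : SimpleGraph (Fin p ⊕ Fin 4) :=
  SimpleGraph.fromRel (fun a b =>
    match a, b with
    | Sum.inl i, Sum.inl j => j.val = i.val + 1
    | Sum.inr u, Sum.inl j => u = 0 ∨ (u = 1 ∧ j.val = 0) ∨ (u = 3 ∧ j.val + 1 = p)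
    | Sum.inr u, Sum.inr w => u = 0 ∧ w = 2
    | _, _ => False)

/-- The ‡ graph on `p + 5` vertices: an induced path `v_1 … v_p` (the `inl` vertices),
adjacent vertices `u1 = inr 0` and `u2 = inr 1` each adjacent to all `v_i`, and
vertices `x1 = inr 2` (adjacent exactly to `v_1, u1`), `x2 = inr 3` (adjacent exactly
to `u1, u2`) and `x3 = inr 4` (adjacent exactly to `v_p, u2`). -/
def ddagGraph (p : ℕ) : SimpleGraph (Fin p ⊕ Fin 5) :=
  SimpleGraph.fromRel (fun a b =>
    match a, b with
    | Sum.inl i, Sum.inl j => j.val = i.val + 1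
    | Sum.inr u, Sum.inl j =>
        u = 0 ∨ u = 1 ∨ (u = 2 ∧ j.val = 0) ∨ (u = 4 ∧ j.val + 1 = p)
    | Sum.inr u, Sum.inr w =>
        (u = 0 ∧ w = 1) ∨ (u = 2 ∧ w = 0) ∨ (u = 3 ∧ (w = 0 ∨ w = 1)) ∨ (u = 4 ∧ w = 1)
    | _, _ => False)

/-- A graph is a minimal non-interval graph iff it is isomorphic to a hole, the long
claw, the whipping top, a † graph, or a ‡ graph. -/
def IsMinimalNonIntervalGraph {W : Type*} (F : SimpleGraph W) : Prop :=
  (∃ n : ℕ, 4 ≤ n ∧ Nonempty (F ≃g cycleG n)) ∨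
  Nonempty (F ≃g longClaw) ∨
  Nonempty (F ≃g whippingTop) ∨
  (∃ p : ℕ, 2 ≤ p ∧ Nonempty (F ≃g dagGraph p)) ∨
  (∃ p : ℕ, 1 ≤ p ∧ Nonempty (F ≃g ddagGraph p))

/-- The `k`-sun: the `inl` vertices form a clique (the even-numbered vertices of the
cycle of length `2k`), the `inr` vertices are independent, and `inr j` is adjacent to
`inl j` and `inl ((j+1) mod k)`. -/
def sunGraph (k : ℕ) : SimpleGraph (Fin k ⊕ Fin k) :=
  SimpleGraph.fromRel (fun a b =>
    match a, b with
    | Sum.inl _, Sum.inl _ => True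
    | Sum.inl i, Sum.inr j => i = j ∨ i.val = (j.val + 1) % k
    | _, _ => False)

/-- The graph `\overline{S_k}^+`: the complement of the `k`-sun together with a new
vertex (`none`) adjacent exactly to the `k` vertices forming a clique in the
complement (the `inr` vertices). -/
def sunComplPlus (k : ℕ) : SimpleGraph (Option (Fin k ⊕ Fin k)) :=
  SimpleGraph.fromRel (fun a b =>
    match a, b with
    | some x, some y => (sunGraph k)ᶜ.Adj x y
    | some (Sum.inr _), none => True
    | _, _ => False)

/-- The graph `S^1_k`: the disjoint union of a sun and the gadget `D_k`, with two
triangle vertices of the sun identified with `v_1` and `v_k` of the gadget, plus all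
edges between `{v_2, …, v_{k-1}}` and the four remaining sun vertices.  Here the
`inl` vertices are the gadget clique `v_1 … v_k` (0-based), `inr (inl a)` is the
gadget independent vertex `w_{a+1}`, and `inr (inr t)` for `t = 0,1,2,3` are the
third triangle vertex, and the three degree-two sun vertices adjacent (in the sun) to
`{v_1,v_k}`, `{v_1,t}`, `{v_k,t}` respectively. -/
def S1 (k : ℕ) : SimpleGraph (Fin k ⊕ (Fin (k - 1) ⊕ Fin 4)) :=
  SimpleGraph.fromRel (fun x y =>
    match x, y with
    | Sum.inl _, Sum.inl _ => True
    | Sum.inr (Sum.inl a), Sum.inl b => b.val ≠ a.val ∧ b.val ≠ a.val + 1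
    | Sum.inr (Sum.inr t), Sum.inl b =>
        t = 0 ∨ t = 1 ∨ (t = 2 ∧ b.val + 1 ≠ k) ∨ (t = 3 ∧ b.val ≠ 0)
    | Sum.inr (Sum.inr t), Sum.inr (Sum.inr t') => t = 0 ∧ (t' = 2 ∨ t' = 3)
    | _, _ => False)

/-- The graph `S^2_k`: the disjoint union of a rising sun and the gadget `D_k`, with
the two degree-five vertices of the rising sun identified with `v_1` and `v_k` of the
gadget, plus all edges between `{v_2, …, v_{k-1}}` and the five remaining rising-sun
vertices.  Here the `inl` vertices are the gadget clique `v_1 … v_k` (0-based),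
`inr (inl a)` is the gadget independent vertex `w_{a+1}`, and `inr (inr t)` for
`t = 0,…,4` are `d1`, `d2`, `x1`, `x2`, `x3` of the rising sun. -/
def S2 (k : ℕ) : SimpleGraph (Fin k ⊕ (Fin (k - 1) ⊕ Fin 5)) :=
  SimpleGraph.fromRel (fun x y =>
    match x, y with
    | Sum.inl _, Sum.inl _ => True
    | Sum.inr (Sum.inl a), Sum.inl b => b.val ≠ a.val ∧ b.val ≠ a.val + 1
    | Sum.inr (Sum.inr t), Sum.inl b =>
        t = 0 ∨ t = 1 ∨ (t = 2 ∧ b.val + 1 ≠ k) ∨ t = 3 ∨ (t = 4 ∧ b.val ≠ 0)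
    | Sum.inr (Sum.inr t), Sum.inr (Sum.inr t') =>
        (t = 0 ∧ t' = 1) ∨ (t = 0 ∧ t' = 2) ∨ (t = 1 ∧ t' = 4)
    | _, _ => False)

/-- The graph `F1` on 10 vertices: a clique `{0,1,2,3}` (= `v0,…,v3`), vertices
`x1 = 4, x2 = 5, x3 = 6` where `x_i` is adjacent exactly to `v0` and the two `v_j`
with `j ∈ {1,2,3} \ {i}`, and vertices `w1 = 7, w2 = 8, w3 = 9` where `w_i` is
adjacent exactly to the two `v_j` with `j ∈ {1,2,3} \ {i}`. -/
def F1 : SimpleGraph (Fin 10) :=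
  SimpleGraph.fromRel (fun a b =>
    (a.val < 4 ∧ b.val < 4) ∨
    (a = 4 ∧ (b = 0 ∨ b = 2 ∨ b = 3)) ∨
    (a = 5 ∧ (b = 0 ∨ b = 1 ∨ b = 3)) ∨
    (a = 6 ∧ (b = 0 ∨ b = 1 ∨ b = 2)) ∨
    (a = 7 ∧ (b = 2 ∨ b = 3)) ∨
    (a = 8 ∧ (b = 1 ∨ b = 3)) ∨
    (a = 9 ∧ (b = 1 ∨ b = 2)))

/-- The graph `F2` on 9 vertices: a clique `{0,1,2,3}` (= `v0,…,v3`) together with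
`x1 = 4` adjacent exactly to `v2, v3`; `x2 = 5` adjacent exactly to `v0, v1, v3`;
`x3 = 6` adjacent exactly to `v1, v2`; `w1 = 7` adjacent exactly to `v3`; and
`w2 = 8` adjacent exactly to `v1`. -/
def F2 : SimpleGraph (Fin 9) :=
  SimpleGraph.fromRel (fun a b =>
    (a.val < 4 ∧ b.val < 4) ∨
    (a = 4 ∧ (b = 2 ∨ b = 3)) ∨
    (a = 5 ∧ (b = 0 ∨ b = 1 ∨ b = 3)) ∨
    (a = 6 ∧ (b = 1 ∨ b = 2)) ∨
    (a = 7 ∧ b = 3) ∨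
    (a = 8 ∧ b = 1))

/-- The net plus an isolated vertex: triangle `0,1,2`, pendant vertices `3,4,5`
attached to `0,1,2` respectively, and an isolated vertex `6`. -/
def netStar : SimpleGraph (Fin 7) :=
  SimpleGraph.fromRel (fun a b =>
    (a = 0 ∧ b = 1) ∨ (a = 0 ∧ b = 2) ∨ (a = 1 ∧ b = 2) ∨
    (a = 3 ∧ b = 0) ∨ (a = 4 ∧ b = 1) ∨ (a = 5 ∧ b = 2))

/-- The graph `W`: the complement of the 4-sun — a clique `0,1,2,3` (= `v1,…,v4`)
plus an independent set `4,5,6,7` (= `u1,…,u4`) with `u_i` adjacent exactly to `v_i`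
and `v_{i+1 mod 4}` — together with a new vertex `8` adjacent exactly to `v1 = 0` and
`v3 = 2`. -/
def Wgraph : SimpleGraph (Fin 9) :=
  SimpleGraph.fromRel (fun a b =>
    (a.val < 4 ∧ b.val < 4) ∨
    (4 ≤ a.val ∧ a.val ≤ 7 ∧ (b.val = a.val - 4 ∨ b.val = (a.val - 4 + 1) % 4)) ∨
    (a = 8 ∧ (b = 0 ∨ b = 2)))

/-- A clique path of a graph `H`: a linear ordering `K_1, …, K_len` of all maximal
cliques of `H` such that for every vertex the cliques containing it are consecutive.
Indices outside `[1, len]` carry the empty set (sentinels). -/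
structure CliquePath (H : SimpleGraph V) where
  len : ℕ
  Kc : ℕ → Set V
  sentinel : ∀ i : ℕ, (i = 0 ∨ len < i) → Kc i = ∅
  maxclique : ∀ i : ℕ, 1 ≤ i → i ≤ len → IsMaxCliqueSet H (Kc i)
  surj : ∀ C : Set V, IsMaxCliqueSet H C → ∃ i, 1 ≤ i ∧ i ≤ len ∧ Kc i = C
  inj : ∀ i j : ℕ, 1 ≤ i → i ≤ len → 1 ≤ j → j ≤ len → Kc i = Kc j → i = j
  consec : ∀ (v : V) (i j k : ℕ), i ≤ j → j ≤ k → v ∈ Kc i → v ∈ Kc k → v ∈ Kc j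

/-- A module of a graph: every vertex outside is adjacent to all of it or none of it. -/
def GraphModule (H : SimpleGraph V) (M : Set V) : Prop :=
  ∀ u ∈ M, ∀ v ∈ M, ∀ x ∉ M, (H.Adj x u ↔ H.Adj x v)

/-- A graph is quasi-prime if every nontrivial module is a clique. -/
def QuasiPrime (H : SimpleGraph V) : Prop :=
  ∀ M : Set V, GraphModule H M → M ≠ Set.univ → ¬ M.Subsingleton → H.IsClique M

lemma coe_eq_coe_iff (x y : ℝ) : (x : Circle) = (y : Circle) ↔ ∃ k : ℤ, x = y + k := by
  rw [QuotientAddGroup.eq_iff_sub_mem, AddSubgroup.mem_zmultiples_iff]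
  constructor
  · rintro ⟨k, hk⟩
    rw [zsmul_eq_mul, mul_one] at hk
    exact ⟨k, by linarith⟩
  · rintro ⟨k, hk⟩
    exact ⟨k, by rw [zsmul_eq_mul, mul_one]; linarith⟩

lemma mem_circleArc_iff {s ℓ t : ℝ} :
    (↑t : Circle) ∈ circleArc s ℓ ↔ ∃ k : ℤ, t + k ∈ Set.Icc s (s + ℓ) := by
  constructor
  · rintro ⟨x, hx, hxt⟩
    obtain ⟨k, hk⟩ := (coe_eq_coe_iff x t).1 hxt
    exact ⟨k, by rwa [← hk]⟩
  · rintro ⟨k, hk⟩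
    exact ⟨t + k, hk, ((coe_eq_coe_iff _ t).2 ⟨k, rfl⟩)⟩

lemma circle_surj (z : Circle) : ∃ t : ℝ, (t : Circle) = z :=
  Quotient.exists_rep z

lemma circleArc_nonempty (s ℓ : ℝ) (h : 0 ≤ ℓ) : (circleArc s ℓ).Nonempty :=
  ⟨(s : Circle), s, ⟨le_refl s, by linarith⟩, rfl⟩

lemma circleArc_shift (s ℓ : ℝ) (k : ℤ) : circleArc (s + k) ℓ = circleArc s ℓ := by
  ext z
  obtain ⟨t, rfl⟩ := circle_surj z
  rw [mem_circleArc_iff, mem_circleArc_iff]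
  constructor
  · rintro ⟨j, hj⟩
    refine ⟨j - k, ?_⟩
    simp only [Set.mem_Icc] at hj ⊢
    push_cast
    constructor <;> linarith [hj.1, hj.2]
  · rintro ⟨j, hj⟩
    refine ⟨j + k, ?_⟩
    simp only [Set.mem_Icc] at hj ⊢
    push_cast
    constructor <;> linarith [hj.1, hj.2]

lemma circleArc_univ {s ℓ : ℝ} (h : 1 ≤ ℓ) : circleArc s ℓ = Set.univ := by
  ext z
  simp only [Set.mem_univ, iff_true]
  obtain ⟨t, rfl⟩ := circle_surj z
  rw [mem_circleArc_iff]
  refine ⟨⌈s - t⌉, ?_⟩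
  have h1 := Int.le_ceil (s - t)
  have h2 := Int.ceil_lt_add_one (s - t)
  constructor <;> [linarith; linarith]


lemma mem_of_not_mem {G : SimpleGraph V} {K S : Set V} (hp : IsSplitPartition G K S)
    {w : V} (hw : w ∉ S) : w ∈ K := by
  have h : w ∈ K ∪ S := hp.1 ▸ Set.mem_univ w
  exact h.resolve_right hw

lemma mem_of_not_mem' {G : SimpleGraph V} {K S : Set V} (hp : IsSplitPartition G K S)
    {w : V} (hw : w ∉ K) : w ∈ S := by
  have h : w ∈ K ∪ S := hp.1 ▸ Set.mem_univ w
  exact h.resolve_left hw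

lemma not_mem_S {G : SimpleGraph V} {K S : Set V} (hp : IsSplitPartition G K S)
    {w : V} (hw : w ∈ K) : w ∉ S := fun h => Set.disjoint_left.1 hp.2.1 hw h

lemma swing_aux {G : SimpleGraph V} {K₁ S₁ K₂ S₂ : Set V}
    (h1 : IsSplitPartition G K₁ S₁) (h2 : IsSplitPartition G K₂ S₂)
    {v : V} (hv1 : v ∈ K₁) (hv2 : v ∉ K₂) :
    ∃ K S w, IsSplitPartition G K S ∧ w ∈ K ∧ ∀ s ∈ S, ¬ G.Adj w s := by
  classical
  have hvS2 : v ∈ S₂ := mem_of_not_mem' h2 hv2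
  by_cases hE : ∀ s ∈ S₁, ¬ G.Adj v s
  · exact ⟨K₁, S₁, v, h1, hv1, hE⟩
  push_neg at hE
  obtain ⟨s₀, hs₀S, hs₀adj⟩ := hE
  -- s₀ ∈ K₂
  have hs₀K2 : s₀ ∈ K₂ := by
    refine mem_of_not_mem h2 fun hs₀S2 => ?_
    have hne : v ≠ s₀ := fun h => not_mem_S h1 hv1 (h ▸ hs₀S)
    exact h2.2.2.2 hvS2 hs₀S2 hne hs₀adj
  -- K₁ \ {v} ⊆ K₂
  have hK1sub : ∀ u ∈ K₁, u ≠ v → u ∈ K₂ := by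
    intro u hu hne
    by_contra huK2
    have huS2 : u ∈ S₂ := mem_of_not_mem' h2 huK2
    exact h2.2.2.2 huS2 hvS2 hne (h1.2.2.1 hu hv1 hne)
  -- new partition : (K₁ ∪ {s₀}, S₁ \ {s₀})
  refine ⟨insert s₀ K₁, S₁ \ {s₀}, s₀, ⟨?_, ?_, ?_, ?_⟩, Set.mem_insert _ _, ?_⟩
  · apply Set.eq_univ_of_forall
    intro w
    by_cases hw : w ∈ S₁ \ {s₀}
    · exact Or.inr hw
    · simp only [Set.mem_diff, Set.mem_singleton_iff, not_and, not_not] at hw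
      by_cases hwS : w ∈ S₁
      · exact Or.inl (Set.mem_insert_iff.2 (Or.inl (hw hwS)))
      · exact Or.inl (Set.mem_insert_iff.2 (Or.inr (mem_of_not_mem h1 hwS)))
  · rw [Set.disjoint_left]
    rintro w (rfl | hwK1)
    · simp
    · exact fun hw => not_mem_S h1 hwK1 hw.1
  · intro x hx y hy hxy
    rcases Set.mem_insert_iff.1 hx with rfl | hxK <;>
      rcases Set.mem_insert_iff.1 hy with rfl | hyK
    · exact absurd rfl hxy
    · -- x = s₀, y ∈ K₁
      by_cases hyv : y = v
      · subst hyv; exact hs₀adj.symm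
      · exact (h2.2.2.1 hs₀K2 (hK1sub y hyK hyv) hxy)
    · by_cases hxv : x = v
      · subst hxv; exact hs₀adj
      · exact (h2.2.2.1 (hK1sub x hxK hxv) hs₀K2 hxy)
    · exact h1.2.2.1 hxK hyK hxy
  · intro x hx y hy hxy
    exact h1.2.2.2 hx.1 hy.1 hxy
  · intro s hs
    exact h1.2.2.2 hs₀S hs.1 (fun h => hs.2 h.symm)

lemma swing_of_ambiguous {G : SimpleGraph V} (ha : Ambiguous G) :
    ∃ K S w, IsSplitPartition G K S ∧ w ∈ K ∧ ∀ s ∈ S, ¬ G.Adj w s := by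
  obtain ⟨K₁, S₁, K₂, S₂, h1, h2, hne⟩ := ha
  have hS : S₁ = K₁ᶜ := by
    ext w
    constructor
    · intro hw
      exact fun hK => not_mem_S h1 hK hw
    · intro hw
      exact mem_of_not_mem' h1 hw
  have hS2 : S₂ = K₂ᶜ := by
    ext w
    constructor
    · intro hw
      exact fun hK => not_mem_S h2 hK hw
    · intro hw
      exact mem_of_not_mem' h2 hw
  have hKne : K₁ ≠ K₂ := by
    rintro rfl
    exact hne (by rw [Prod.ext_iff]; exact ⟨rfl, by rw [hS, hS2]⟩)
  by_cases hsub : K₁ ⊆ K₂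
  · obtain ⟨v, hv2, hv1⟩ := Set.not_subset.1 (fun h => hKne (le_antisymm hsub h))
    exact swing_aux h2 h1 hv2 hv1
  · obtain ⟨v, hv1, hv2⟩ := Set.not_subset.1 hsub
    exact swing_aux h1 h2 hv1 hv2

lemma order_of_model {G : SimpleGraph V} (M : CircularArcModel G) {K S : Set V} {v : V}
    (hp : IsSplitPartition G K S) (hvK : v ∈ K) (hv : ∀ s ∈ S, ¬ G.Adj v s) :
    ∃ c : V → ℝ, (∀ s ∈ S, ∀ s' ∈ S, c s = c s' → s = s') ∧
      (∀ u ∈ K, u ≠ v → ∀ s₁ ∈ S, ∀ s₂ ∈ S, ∀ s₃ ∈ S,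
        c s₁ < c s₂ → c s₂ < c s₃ → ¬G.Adj u s₁ → ¬G.Adj u s₃ → ¬G.Adj u s₂) := by
  classical
  rcases Set.eq_empty_or_nonempty S with rfl | ⟨s₀, hs₀⟩
  · exact ⟨fun _ => 0, by simp, by simp⟩
  choose a ℓ hl0 harc using M.isArc
  -- basic disjointness facts
  have hdisjS : ∀ s ∈ S, (M.arc v ∩ M.arc s) = ∅ := by
    intro s hs
    by_contra h
    have hne : v ≠ s := fun h' => not_mem_S hp hvK (h' ▸ hs)
    exact hv s hs ((M.adj_iff v s hne).2 (Set.nonempty_iff_ne_empty.2 h))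
  have hSdisj : ∀ s ∈ S, ∀ s' ∈ S, s ≠ s' → (M.arc s ∩ M.arc s') = ∅ := by
    intro s hs s' hs' hne
    by_contra h
    exact hp.2.2.2 hs hs' hne ((M.adj_iff s s' hne).2 (Set.nonempty_iff_ne_empty.2 h))
  -- lengths < 1
  have hlS : ∀ s ∈ S, ℓ s < 1 := by
    intro s hs
    by_contra h
    push_neg at h
    have h3 : M.arc v ∩ M.arc s = M.arc v := by
      rw [harc s, circleArc_univ h, Set.inter_univ]
    have h2 := hdisjS s hs
    rw [h3, harc v] at h2
    exact absurd h2 (Set.nonempty_iff_ne_empty.1 (circleArc_nonempty _ _ (hl0 v)))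
  have hlv : ℓ v < 1 := by
    by_contra h
    push_neg at h
    have h3 : M.arc v ∩ M.arc s₀ = M.arc s₀ := by
      rw [harc v, circleArc_univ h, Set.univ_inter]
    have h2 := hdisjS s₀ hs₀
    rw [h3, harc s₀] at h2
    exact absurd h2 (Set.nonempty_iff_ne_empty.1 (circleArc_nonempty _ _ (hl0 s₀)))
  -- shifted left endpoints
  set c : V → ℝ := fun s => a s + (⌈a v - a s⌉ : ℤ) with hcdef
  have harcS : ∀ s : V, M.arc s = circleArc (c s) (ℓ s) := fun s => by
    rw [hcdef]; rw [circleArc_shift, harc]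
  have hcv : c v = a v := by simp [hcdef]
  have hcge : ∀ s : V, a v ≤ c s := fun s => by
    have := Int.le_ceil (a v - a s); simp only [hcdef]; linarith
  have hclt : ∀ s : V, c s < a v + 1 := fun s => by
    have := Int.ceil_lt_add_one (a v - a s); simp only [hcdef]; linarith
  have hmem : ∀ (s : V) (x : ℝ), c s ≤ x → x ≤ c s + ℓ s → (x : Circle) ∈ M.arc s := by
    intro s x h1 h2
    rw [harcS s, mem_circleArc_iff]
    exact ⟨0, by push_cast; constructor <;> linarith⟩
  have hmem1 : ∀ (s : V) (x : ℝ), c s ≤ x + 1 → x + 1 ≤ c s + ℓ s →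
      (x : Circle) ∈ M.arc s := by
    intro s x h1 h2
    rw [harcS s, mem_circleArc_iff]
    exact ⟨1, by push_cast; constructor <;> linarith⟩
  -- c s > bv and c s + ℓ s < a v + 1 for s ∈ S
  have hcgt : ∀ s ∈ S, a v + ℓ v < c s := by
    intro s hs
    by_contra h
    push_neg at h
    have h1 : ((c s : ℝ) : Circle) ∈ M.arc v ∩ M.arc s :=
      ⟨by rw [← hcv] at *; exact hmem v _ (by rw [hcv]; exact hcge s) (by rw [hcv]; linarith),
       hmem s _ le_rfl (by linarith [hl0 s])⟩
    rw [hdisjS s hs] at h1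
    exact h1
  have hdlt : ∀ s ∈ S, c s + ℓ s < a v + 1 := by
    intro s hs
    by_contra h
    push_neg at h
    have h1 : ((a v : ℝ) : Circle) ∈ M.arc v ∩ M.arc s :=
      ⟨hmem v _ hcv.le (by rw [hcv]; linarith [hl0 v]),
       hmem1 s _ (by linarith [hclt s]) h⟩
    rw [hdisjS s hs] at h1
    exact h1
  -- order separation for distinct S vertices
  have hsep : ∀ s ∈ S, ∀ s' ∈ S, s ≠ s' → c s < c s' → c s + ℓ s < c s' := by
    intro s hs s' hs' hne hlt
    by_contra h
    push_neg at h
    have h1 : ((c s' : ℝ) : Circle) ∈ M.arc s ∩ M.arc s' :=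
      ⟨hmem s _ (le_of_lt hlt) h, hmem s' _ le_rfl (by linarith [hl0 s'])⟩
    rw [hSdisj s hs s' hs' hne] at h1
    exact h1
  refine ⟨c, ?_, ?_⟩
  · -- injectivity
    intro s hs s' hs' hcc
    by_contra hne
    have h1 : ((c s : ℝ) : Circle) ∈ M.arc s ∩ M.arc s' :=
      ⟨hmem s _ le_rfl (by linarith [hl0 s]), hmem s' _ (le_of_eq hcc.symm)
        (by rw [← hcc]; linarith [hl0 s'])⟩
    rw [hSdisj s hs s' hs' hne] at h1
    exact h1
  · -- convexity
    intro u huK hune s₁ hs₁ s₂ hs₂ s₃ hs₃ h12 h23 hn1 hn3 hadj2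
    have huS : u ∉ S := not_mem_S hp huK
    have hne1 : u ≠ s₁ := fun h => huS (h ▸ hs₁)
    have hne2 : u ≠ s₂ := fun h => huS (h ▸ hs₂)
    have hne3 : u ≠ s₃ := fun h => huS (h ▸ hs₃)
    have hlu : ℓ u < 1 := by
      by_contra h
      push_neg at h
      refine hn1 ((M.adj_iff u s₁ hne1).2 ?_)
      rw [harc u, circleArc_univ h, Set.univ_inter, harc s₁]
      exact circleArc_nonempty _ _ (hl0 s₁)
    -- u meets v's arc
    have hadjuv : G.Adj u v := hp.2.2.1 huK hvK hune
    obtain ⟨z, hzu, hzv⟩ := (M.adj_iff u v hune).1 hadjuv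
    rw [harcS v] at hzv
    obtain ⟨y, hy, rfl⟩ := hzv
    rw [harc u, mem_circleArc_iff] at hzu
    obtain ⟨k, hk⟩ := hzu
    set α : ℝ := a u - k with hα
    have harcu : M.arc u = circleArc α (ℓ u) := by
      rw [hα, sub_eq_add_neg, ← Int.cast_neg, circleArc_shift, harc]
    have hyα : α ≤ y ∧ y ≤ α + ℓ u := by
      simp only [Set.mem_Icc] at hk
      constructor <;> [skip; skip] <;> simp only [hα] <;> linarith [hk.1, hk.2]
    rw [hcv] at hy
    -- u meets s₂'s arc
    obtain ⟨w, hwu, hws⟩ := (M.adj_iff u s₂ hne2).1 hadj2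
    rw [harcS s₂] at hws
    obtain ⟨z', hz', rfl⟩ := hws
    rw [harcu, mem_circleArc_iff] at hwu
    obtain ⟨j, hj⟩ := hwu
    simp only [Set.mem_Icc] at hj hz' hy
    -- bounds on j
    have hβy : α + ℓ u ≤ (a v + ℓ v) + ℓ u := by linarith [hyα.2, hy.2]
    have hj0 : j ≤ 0 := by
      by_contra h
      push_neg at h
      have : (1 : ℝ) ≤ (j : ℝ) := by exact_mod_cast h
      have := hcgt s₂ hs₂
      linarith [hj.2, hz'.1, hyα.1, hy.2]
    have hjm1 : (-1 : ℤ) ≤ j := by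
      by_contra h
      push_neg at h
      have h2 : j ≤ -2 := by omega
      have : (j : ℝ) ≤ -2 := by exact_mod_cast h2
      have := hdlt s₂ hs₂
      linarith [hj.1, hz'.2, hyα.2, hy.1]
    interval_cases j
    · -- j = -1 : u's arc reaches s₂ - 1, so it contains s₃ - 1
      have hx1 : z' - 1 ≤ c s₂ + ℓ s₂ - 1 := by linarith [hz'.2]
      have h23' := hsep s₂ hs₂ s₃ hs₃ (fun h => (by linarith [h ▸ h23] : False)) h23
      have hmem3 : ((c s₃ - 1 : ℝ) : Circle) ∈ M.arc u ∩ M.arc s₃ := by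
        constructor
        · rw [harcu, mem_circleArc_iff]
          refine ⟨0, ?_⟩
          push_cast at hj ⊢
          constructor
          · linarith [hj.1, hz'.2, h23']
          · linarith [hyα.2, hy.1, hclt s₃]
        · exact hmem1 s₃ _ (by linarith) (by linarith [hl0 s₃])
      have : (M.arc u ∩ M.arc s₃) = ∅ := by
        by_contra h
        exact hn3 ((M.adj_iff u s₃ hne3).2 (Set.nonempty_iff_ne_empty.2 h))
      rw [this] at hmem3
      exact hmem3
    · -- j = 0 : u's arc contains s₁
      have h12' := hsep s₁ hs₁ s₂ hs₂ (fun h => (by linarith [h ▸ h12] : False)) h12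
      have hmem1' : ((c s₁ : ℝ) : Circle) ∈ M.arc u ∩ M.arc s₁ := by
        constructor
        · rw [harcu, mem_circleArc_iff]
          refine ⟨0, ?_⟩
          push_cast at hj ⊢
          constructor
          · linarith [hyα.1, hy.2, hcgt s₁ hs₁]
          · linarith [hj.2, hz'.1, hl0 s₁, h12']
        · exact hmem s₁ _ le_rfl (by linarith [hl0 s₁])
      have : (M.arc u ∩ M.arc s₁) = ∅ := by
        by_contra h
        exact hn1 ((M.adj_iff u s₁ hne1).2 (Set.nonempty_iff_ne_empty.2 h))
      rw [this] at hmem1'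
      exact hmem1'


lemma circleArc_zero (p : ℝ) : circleArc p 0 = {((p : ℝ) : Circle)} := by
  unfold circleArc
  rw [add_zero, Set.Icc_self, Set.image_singleton]

set_option maxHeartbeats 2000000 in
lemma helly_of_order [Fintype V] {G : SimpleGraph V} {K S : Set V} {v : V}
    (hp : IsSplitPartition G K S) (hvK : v ∈ K) (hv : ∀ s ∈ S, ¬ G.Adj v s)
    (c : V → ℝ) (hinj : ∀ s ∈ S, ∀ s' ∈ S, c s = c s' → s = s')
    (hconv : ∀ u ∈ K, u ≠ v → ∀ s₁ ∈ S, ∀ s₂ ∈ S, ∀ s₃ ∈ S,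
        c s₁ < c s₂ → c s₂ < c s₃ → ¬G.Adj u s₁ → ¬G.Adj u s₃ → ¬G.Adj u s₂) :
    IsHellyCircularArcGraph G := by
  classical
  set Sf : Finset V := (Set.toFinite S).toFinset with hSf
  have hmemSf : ∀ w : V, w ∈ Sf ↔ w ∈ S := fun w => Set.Finite.mem_toFinset _
  set m : ℕ := Sf.card with hm
  set den : ℝ := (m : ℝ) + 1 with hden
  have hden0 : (0 : ℝ) < den := by positivity
  set rank : V → ℕ := fun s => (Sf.filter (fun s' => c s' < c s)).card + 1 with hrank
  set t : V → ℝ := fun s => (rank s : ℝ) / den with ht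
  -- rank facts
  have hr1 : ∀ s : V, 1 ≤ rank s := fun s => Nat.le_add_left 1 _
  have hrm : ∀ s ∈ S, rank s ≤ m := by
    intro s hs
    have hsub : Sf.filter (fun s' => c s' < c s) ⊆ Sf.erase s := by
      intro x hx
      rw [Finset.mem_filter] at hx
      exact Finset.mem_erase.2 ⟨fun h => absurd (h ▸ hx.2) (lt_irrefl _), hx.1⟩
    have h1 := Finset.card_le_card hsub
    rw [Finset.card_erase_of_mem ((hmemSf s).2 hs)] at h1
    have h2 : 0 < m := Finset.card_pos.2 ⟨s, (hmemSf s).2 hs⟩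
    simp only [hrank]
    omega
  have hmono : ∀ s ∈ S, ∀ s' ∈ S, c s < c s' → rank s < rank s' := by
    intro s hs s' hs' hlt
    have hss : Sf.filter (fun x => c x < c s) ⊂ Sf.filter (fun x => c x < c s') := by
      refine ⟨Finset.filter_subset_filter _ (le_refl Sf) |>.trans ?_, ?_⟩
      · exact fun x hx => by
          rw [Finset.mem_filter] at hx ⊢
          exact ⟨hx.1, lt_trans hx.2 hlt⟩
      · intro hsub
        have : s ∈ Sf.filter (fun x => c x < c s) :=
          hsub (Finset.mem_filter.2 ⟨(hmemSf s).2 hs, hlt⟩)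
        rw [Finset.mem_filter] at this
        exact absurd this.2 (lt_irrefl _)
    have := Finset.card_lt_card hss
    simp only [hrank]
    omega
  have htrich : ∀ s ∈ S, ∀ s' ∈ S, rank s < rank s' → c s < c s' := by
    intro s hs s' hs' hlt
    rcases lt_trichotomy (c s) (c s') with h | h | h
    · exact h
    · exact absurd (hinj s hs s' hs' h ▸ hlt) (lt_irrefl _)
    · exact absurd (hmono s' hs' s hs h) (by omega)
  have hrinj : ∀ s ∈ S, ∀ s' ∈ S, rank s = rank s' → s = s' := by
    intro s hs s' hs' h
    rcases lt_trichotomy (c s) (c s') with h' | h' | h'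
    · exact absurd (hmono s hs s' hs' h') (by omega)
    · exact hinj s hs s' hs' h'
    · exact absurd (hmono s' hs' s hs h') (by omega)
  -- t facts
  have ht0 : ∀ s : V, 0 < t s := by
    intro s
    simp only [ht]
    have := hr1 s
    positivity
  have ht1 : ∀ s ∈ S, t s < 1 := by
    intro s hs
    simp only [ht, div_lt_one hden0, hden]
    have h2 : rank s < m + 1 := Nat.lt_succ_of_le (hrm s hs)
    rw [div_lt_one (by positivity)]
    exact_mod_cast h2
  -- the block of non-neighbours
  set B : V → Finset V := fun u => Sf.filter (fun s => ¬ G.Adj u s) with hBdef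
  set lo : V → ℕ := fun u =>
    if h : (B u).Nonempty then ((B u).image rank).min' (h.image rank) else 0 with hlodef
  set hi : V → ℕ := fun u =>
    if h : (B u).Nonempty then ((B u).image rank).max' (h.image rank) else 0 with hhidef
  have hBS : ∀ u : V, ∀ s ∈ B u, s ∈ S ∧ ¬ G.Adj u s := by
    intro u s hs
    rw [hBdef] at hs
    simp only [Finset.mem_filter] at hs
    exact ⟨(hmemSf s).1 hs.1, hs.2⟩
  have hlomem : ∀ u : V, ∀ h : (B u).Nonempty, ∃ s ∈ B u, rank s = lo u := by
    intro u h
    have h1 : lo u ∈ (B u).image rank := by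
      rw [hlodef]; simp only [dif_pos h]; exact Finset.min'_mem _ _
    obtain ⟨s, hs, hr⟩ := Finset.mem_image.1 h1
    exact ⟨s, hs, hr⟩
  have hhimem : ∀ u : V, ∀ h : (B u).Nonempty, ∃ s ∈ B u, rank s = hi u := by
    intro u h
    have h1 : hi u ∈ (B u).image rank := by
      rw [hhidef]; simp only [dif_pos h]; exact Finset.max'_mem _ _
    obtain ⟨s, hs, hr⟩ := Finset.mem_image.1 h1
    exact ⟨s, hs, hr⟩
  have hlole : ∀ u : V, ∀ s ∈ B u, lo u ≤ rank s ∧ rank s ≤ hi u := by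
    intro u s hs
    have hne : (B u).Nonempty := ⟨s, hs⟩
    constructor
    · rw [hlodef]; simp only [dif_pos hne]
      exact Finset.min'_le _ _ (Finset.mem_image_of_mem rank hs)
    · rw [hhidef]; simp only [dif_pos hne]
      exact Finset.le_max' _ _ (Finset.mem_image_of_mem rank hs)
  have hlo1 : ∀ u : V, ∀ _ : (B u).Nonempty, 1 ≤ lo u ∧ lo u ≤ hi u ∧ hi u ≤ m := by
    intro u h
    obtain ⟨sa, hsa, hra⟩ := hlomem u h
    obtain ⟨sc, hsc, hrc⟩ := hhimem u h
    refine ⟨hra ▸ hr1 sa, (hlole u sa hsa).2.trans_eq' hra, ?_⟩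
    exact hrc ▸ hrm sc (hBS u sc hsc).1
  -- the arcs for clique vertices
  set xw : V → ℝ := fun u => ((hi u : ℝ) + 1/2) / den with hxw
  set Lw : V → ℝ := fun u => 1 + ((lo u : ℝ) - 1/2) / den - ((hi u : ℝ) + 1/2) / den with hLw
  have hdivle : ∀ x y : ℝ, x / den ≤ y / den ↔ x ≤ y :=
    fun x y => div_le_div_iff_of_pos_right hden0
  have hLw0 : ∀ u : V, (B u).Nonempty → 0 ≤ Lw u := by
    intro u h
    obtain ⟨h1, h2, h3⟩ := hlo1 u h
    simp only [hLw]
    have e1 : ((lo u : ℝ) - 1/2) / den - ((hi u : ℝ) + 1/2) / den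
        = -(((hi u : ℝ) - (lo u : ℝ) + 1) / den) := by ring
    have e2 : ((hi u : ℝ) - (lo u : ℝ) + 1) / den ≤ 1 := by
      rw [div_le_one hden0, hden]
      have c3 : (hi u : ℝ) ≤ (m : ℝ) := by exact_mod_cast h3
      have c1 : (1 : ℝ) ≤ (lo u : ℝ) := by exact_mod_cast h1
      linarith
    linarith [e1, e2]
  set arcK : V → Set Circle := fun u =>
    if (B u).Nonempty then circleArc (xw u) (Lw u) else circleArc 0 1 with harcK
  -- membership facts
  have hKzero : ∀ u : V, ((0 : ℝ) : Circle) ∈ arcK u := by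
    intro u
    simp only [harcK]
    by_cases h : (B u).Nonempty
    · rw [if_pos h, mem_circleArc_iff]
      refine ⟨1, ?_⟩
      obtain ⟨h1, h2, h3⟩ := hlo1 u h
      have c3 : (hi u : ℝ) ≤ (m : ℝ) := by exact_mod_cast h3
      have c1 : (1 : ℝ) ≤ (lo u : ℝ) := by exact_mod_cast h1
      simp only [Set.mem_Icc, Int.cast_one, zero_add, hxw, hLw]
      constructor
      · rw [div_le_iff₀ hden0]
        simp only [hden]
        linarith
      · have e1 : 0 ≤ ((lo u : ℝ) - 1/2) / den := by
          apply div_nonneg _ hden0.le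
          linarith
        linarith
    · rw [if_neg h, circleArc_univ le_rfl]
      trivial
  have hKmem : ∀ u : V, ∀ h : (B u).Nonempty, ∀ s ∈ S,
      (((t s : ℝ)) : Circle) ∈ arcK u ↔ (rank s < lo u ∨ hi u < rank s) := by
    intro u h s hs
    obtain ⟨h1, h2, h3⟩ := hlo1 u h
    have c3 : (hi u : ℝ) ≤ (m : ℝ) := by exact_mod_cast h3
    have c1 : (1 : ℝ) ≤ (lo u : ℝ) := by exact_mod_cast h1
    have c2 : (lo u : ℝ) ≤ (hi u : ℝ) := by exact_mod_cast h2
    have hts0 := ht0 s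
    have hts1 := ht1 s hs
    have hxw1 : xw u < 1 := by
      simp only [hxw]; rw [div_lt_one hden0]; simp only [hden]; linarith
    have hxw0 : 0 < xw u := by
      simp only [hxw]
      apply div_pos _ hden0
      have : (0:ℝ) ≤ (hi u : ℝ) := Nat.cast_nonneg _
      linarith
    have hxLeq : xw u + Lw u = 1 + ((lo u : ℝ) - 1/2) / den := by
      simp only [hxw, hLw]; ring
    have hxL1 : 1 < xw u + Lw u := by
      rw [hxLeq]
      have e1 : 0 < ((lo u : ℝ) - 1/2) / den := by
        apply div_pos _ hden0; linarith
      linarith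
    have hxL2 : xw u + Lw u < 2 := by
      rw [hxLeq]
      have e1 : ((lo u : ℝ) - 1/2) / den < 1 := by
        rw [div_lt_one hden0]; simp only [hden]; linarith
      linarith
    simp only [harcK]
    rw [if_pos h, mem_circleArc_iff]
    constructor
    · rintro ⟨k, hk⟩
      simp only [Set.mem_Icc] at hk
      have hk0 : 0 ≤ k := by
        by_contra hneg
        push_neg at hneg
        have e0 : k ≤ -1 := by omega
        have e1 : (k : ℝ) ≤ -1 := by exact_mod_cast e0
        linarith [hk.1]
      have hk1 : k ≤ 1 := by
        by_contra hbig
        push_neg at hbig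
        have e1 : (2 : ℝ) ≤ (k : ℝ) := by exact_mod_cast hbig
        linarith [hk.2]
      interval_cases k
      · -- k = 0 : t s ≥ xw u, so rank s > hi u
        right
        have e1 := hk.1
        simp only [Int.cast_zero, add_zero, ht, hxw] at e1
        rw [hdivle] at e1
        have e2 : (hi u : ℝ) < (rank s : ℝ) := by linarith
        exact_mod_cast e2
      · -- k = 1 : t s + 1 ≤ xw + Lw, so rank s < lo u
        left
        have e1 := hk.2
        rw [show xw u + Lw u = 1 + ((lo u : ℝ) - 1/2) / den from hxLeq] at e1
        simp only [Int.cast_one, ht] at e1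
        have e2 : (rank s : ℝ) / den ≤ ((lo u : ℝ) - 1/2) / den := by linarith
        rw [hdivle] at e2
        have e3 : (rank s : ℝ) < (lo u : ℝ) := by linarith
        exact_mod_cast e3
    · intro hcase
      rcases hcase with hlt | hgt
      · refine ⟨1, ?_⟩
        simp only [Set.mem_Icc, Int.cast_one]
        have e1 : (rank s : ℝ) + 1 ≤ (lo u : ℝ) := by exact_mod_cast hlt
        constructor
        · linarith
        · rw [hxLeq]
          simp only [ht]
          have e2 : (rank s : ℝ) / den ≤ ((lo u : ℝ) - 1/2) / den := by
            rw [hdivle]; linarith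
          linarith
      · refine ⟨0, ?_⟩
        simp only [Set.mem_Icc, Int.cast_zero, add_zero]
        have e1 : (hi u : ℝ) + 1 ≤ (rank s : ℝ) := by exact_mod_cast hgt
        constructor
        · simp only [ht, hxw]
          rw [hdivle]
          linarith
        · linarith
  -- graph-level membership for clique vertices
  have hKadj : ∀ u ∈ K, u ≠ v → ∀ s ∈ S, (((t s : ℝ)) : Circle) ∈ arcK u ↔ G.Adj u s := by
    intro u huK hune s hs
    by_cases hB : (B u).Nonempty
    · rw [hKmem u hB s hs]
      constructor
      · intro hcase
        by_contra hnadj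
        have hsB : s ∈ B u := by
          simp only [hBdef, Finset.mem_filter]
          exact ⟨(hmemSf s).2 hs, hnadj⟩
        have := hlole u s hsB
        rcases hcase with h' | h' <;> omega
      · intro hadj
        by_contra hcase
        push_neg at hcase
        obtain ⟨hge, hle⟩ := hcase
        have hge' : lo u ≤ rank s := by omega
        have hle' : rank s ≤ hi u := by omega
        obtain ⟨sa, hsaB, hsar⟩ := hlomem u hB
        obtain ⟨sc, hscB, hscr⟩ := hhimem u hB
        obtain ⟨hsaS, hsaN⟩ := hBS u sa hsaB
        obtain ⟨hscS, hscN⟩ := hBS u sc hscB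
        rcases eq_or_lt_of_le hge' with heq | hlt
        · have he : sa = s := hrinj sa hsaS s hs (hsar.trans heq)
          exact (hsaN (he.symm ▸ hadj)).elim
        rcases eq_or_lt_of_le hle' with heq | hlt2
        · have he : s = sc := hrinj s hs sc hscS (heq.trans hscr.symm)
          exact (hscN (he ▸ hadj)).elim
        have hca : c sa < c s := htrich sa hsaS s hs (by omega)
        have hcc : c s < c sc := htrich s hs sc hscS (by omega)
        exact hconv u huK hune sa hsaS s hs sc hscS hca hcc hsaN hscN hadj
    · have hBempty : B u = ∅ := Finset.not_nonempty_iff_eq_empty.1 hB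
      have hadj : G.Adj u s := by
        by_contra hnadj
        have hsB : s ∈ B u := by
          simp only [hBdef, Finset.mem_filter]
          exact ⟨(hmemSf s).2 hs, hnadj⟩
        rw [hBempty] at hsB
        exact absurd hsB (Finset.notMem_empty s)
      simp only [harcK, if_neg hB, circleArc_univ le_rfl]
      simp [hadj]
  -- distinctness of the marked points
  have hπS : ∀ s ∈ S, ∀ s' ∈ S, s ≠ s' → (((t s : ℝ)) : Circle) ≠ (((t s' : ℝ)) : Circle) := by
    intro s hs s' hs' hne heq
    obtain ⟨k, hk⟩ := (coe_eq_coe_iff _ _).1 heq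
    have h1 := ht0 s
    have h2 := ht1 s hs
    have h3 := ht0 s'
    have h4 := ht1 s' hs'
    have hk0 : k = 0 := by
      have e1 : (k : ℝ) < 1 := by linarith
      have e2 : (-1 : ℝ) < (k : ℝ) := by linarith
      have e3 : k < 1 := by exact_mod_cast e1
      have e4 : (-1 : ℤ) < k := by exact_mod_cast e2
      omega
    rw [hk0] at hk
    simp only [Int.cast_zero, add_zero] at hk
    have : rank s = rank s' := by
      simp only [ht] at hk
      have hdne : den ≠ 0 := ne_of_gt hden0
      field_simp at hk
      exact_mod_cast hk
    exact hne (hrinj s hs s' hs' this)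
  have hπ0 : ∀ s ∈ S, (((t s : ℝ)) : Circle) ≠ (((0 : ℝ)) : Circle) := by
    intro s hs heq
    obtain ⟨k, hk⟩ := (coe_eq_coe_iff _ _).1 heq
    have h1 := ht0 s
    have h2 := ht1 s hs
    rw [zero_add] at hk
    have e3 : k < 1 := by
      have : (k : ℝ) < 1 := by linarith
      exact_mod_cast this
    have e4 : (0 : ℤ) < k := by
      have : (0 : ℝ) < (k : ℝ) := by linarith
      exact_mod_cast this
    omega
  -- the model
  set arcF : V → Set Circle := fun w =>
    if w ∈ S then circleArc (t w) 0 else if w = v then circleArc 0 0 else arcK w with harcF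
  have harcFS : ∀ s ∈ S, arcF s = {(((t s : ℝ)) : Circle)} := by
    intro s hs
    simp only [harcF, if_pos hs, circleArc_zero]
  have harcFv : arcF v = {(((0 : ℝ)) : Circle)} := by
    have hvS : v ∉ S := not_mem_S hp hvK
    simp [harcF, hvS, circleArc_zero]
  have harcFK : ∀ w : V, w ∉ S → w ≠ v → arcF w = arcK w := by
    intro w h1 h2
    simp only [harcF, if_neg h1, if_neg h2]
  have hisArc : ∀ w : V, ∃ st ℓ : ℝ, 0 ≤ ℓ ∧ arcF w = circleArc st ℓ := by
    intro w
    by_cases hwS : w ∈ S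
    · exact ⟨t w, 0, le_rfl, by simp only [harcF, if_pos hwS]⟩
    by_cases hwv : w = v
    · exact ⟨0, 0, le_rfl, by simp only [harcF, if_neg hwS, if_pos hwv]⟩
    rw [harcFK w hwS hwv]
    by_cases hB : (B w).Nonempty
    · exact ⟨xw w, Lw w, hLw0 w hB, by simp only [harcK, if_pos hB]⟩
    · exact ⟨0, 1, zero_le_one, by simp only [harcK, if_neg hB]⟩
  have hadj_iff : ∀ u w : V, u ≠ w → (G.Adj u w ↔ (arcF u ∩ arcF w).Nonempty) := by
    have main : ∀ u w : V, u ≠ w → u ∈ S →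
        (G.Adj u w ↔ (arcF u ∩ arcF w).Nonempty) := by
      intro u w hne huS
      by_cases hwS : w ∈ S
      · refine iff_of_false (hp.2.2.2 huS hwS hne) ?_
        rintro ⟨z, hz1, hz2⟩
        rw [harcFS u huS] at hz1
        rw [harcFS w hwS] at hz2
        exact hπS u huS w hwS hne (hz1.symm.trans  hz2 ▸ rfl)
      by_cases hwv : w = v
      · subst hwv
        refine iff_of_false (fun h => hv u huS h.symm) ?_
        rintro ⟨z, hz1, hz2⟩
        rw [harcFS u huS] at hz1
        rw [harcFv] at hz2
        exact hπ0 u huS (hz1.symm.trans hz2 ▸ rfl)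
      · have hwK : w ∈ K := mem_of_not_mem hp hwS
        rw [harcFS u huS, harcFK w hwS hwv, Set.singleton_inter_nonempty,
          hKadj w hwK hwv u huS, G.adj_comm]
    intro u w hne
    by_cases huS : u ∈ S
    · exact main u w hne huS
    by_cases hwS : w ∈ S
    · rw [G.adj_comm, Set.inter_comm]
      exact main w u hne.symm hwS
    have huK : u ∈ K := mem_of_not_mem hp huS
    have hwK : w ∈ K := mem_of_not_mem hp hwS
    refine iff_of_true (hp.2.2.1 huK hwK hne) ?_
    refine ⟨(((0 : ℝ)) : Circle), ?_, ?_⟩ <;>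
      [by_cases huv : u = v; by_cases hwv : w = v]
    · rw [huv, harcFv]; rfl
    · rw [harcFK u huS huv]; exact hKzero u
    · rw [hwv, harcFv]; rfl
    · rw [harcFK w hwS hwv]; exact hKzero w
  refine ⟨⟨arcF, hisArc, hadj_iff⟩, ?_⟩
  intro C hC
  by_cases hCS : ∃ s ∈ C, s ∈ S
  · obtain ⟨s, hsC, hsS⟩ := hCS
    refine ⟨(((t s : ℝ)) : Circle), ?_⟩
    intro w hwC
    show (((t s : ℝ)) : Circle) ∈ arcF w
    by_cases hws : w = s
    · rw [hws, harcFS s hsS]; rfl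
    · have hadj : G.Adj w s := hC.1 hwC hsC hws
      have hwS : w ∉ S := fun hwS => hp.2.2.2 hwS hsS hws hadj
      have hwv : w ≠ v := fun h => hv s hsS (h ▸ hadj)
      have hwK : w ∈ K := mem_of_not_mem hp hwS
      rw [harcFK w hwS hwv]
      exact (hKadj w hwK hwv s hsS).2 hadj
  · push_neg at hCS
    refine ⟨(((0 : ℝ)) : Circle), ?_⟩
    intro w hwC
    show (((0 : ℝ)) : Circle) ∈ arcF w
    by_cases hwv : w = v
    · rw [hwv, harcFv]; rfl
    · rw [harcFK w (hCS w hwC) hwv]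
      exact hKzero w

/-- An ambiguous split graph is a Helly circular-arc graph iff it is
a circular-arc graph. -/
theorem statement7 {V : Type*} [Fintype V] (G : SimpleGraph V) (hG : IsSplitGraph G)
    (ha : Ambiguous G) :
    IsHellyCircularArcGraph G ↔ IsCircularArcGraph G := by
  constructor
  · rintro ⟨M, _⟩
    exact ⟨M⟩
  · rintro ⟨M⟩
    obtain ⟨K, S, w, hp, hwK, hw⟩ := swing_of_ambiguous ha
    obtain ⟨c, hinj, hconv⟩ := order_of_model M hp hwK hw
    exact helly_of_order hp hwK hw c hinj hconv

end CAG
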